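/- Let g be the 6-dimensional real Lie algebra with basis e_1, …, e_6 whose only nonzero brackets of basis vectors (up to antisymmetry) are ⁅e_1, e_2⁆ = e_3, ⁅e_1, e_3⁆ = e_4, ⁅e_1, e_4⁆ = e_6, ⁅e_2, e_3⁆ = e_6, ⁅e_2, e_5⁆ = e_6 (this bracket satisfies the Jacobi identity and g is nilpotent; it is the Lie algebra N_{6,1,4}). Then g does not admit any nice basis. -/

import Mathlib

/-- The structure constants of a basis of a real Lie algebra. -/
noncomputable def structConst {g : Type*} [LieRing g] [LieAlgebra ℝ g] {n : ℕ}
    (b : Module.Basis (Fin n) ℝ g) (i j k : Fin n) : ℝ :=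
  b.repr ⁅b i, b j⁆ k

/-- A basis of a real Lie algebra is *nice*. -/
def IsNiceBasis {g : Type*} [LieRing g] [LieAlgebra ℝ g] {n : ℕ}
    (b : Module.Basis (Fin n) ℝ g) : Prop :=
  (∀ i j, ∃ (k : Fin n) (c : ℝ), ⁅b i, b j⁆ = c • b k) ∧
  (∀ i k j j', structConst b i j k ≠ 0 → structConst b i j' k ≠ 0 → j = j')

lemma lie_sum' {g : Type*} [LieRing g] [LieAlgebra ℝ g] {ι : Type*} (s : Finset ι)
    (x : g) (f : ι → g) : ⁅x, ∑ i ∈ s, f i⁆ = ∑ i ∈ s, ⁅x, f i⁆ := by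
  simpa only [LieAlgebra.ad_apply] using map_sum (LieAlgebra.ad ℝ g x) f s

lemma sum_lie' {g : Type*} [LieRing g] [LieAlgebra ℝ g] {ι : Type*} (s : Finset ι)
    (x : g) (f : ι → g) : ⁅∑ i ∈ s, f i, x⁆ = ∑ i ∈ s, ⁅f i, x⁆ := by
  rw [← lie_skew, lie_sum', ← Finset.sum_neg_distrib]
  exact Finset.sum_congr rfl fun i _ => by rw [← lie_skew, neg_neg]

lemma lie_mem_of_forall_basis {g : Type*} [LieRing g] [LieAlgebra ℝ g] {n : ℕ}
    (b : Module.Basis (Fin n) ℝ g) {M : Submodule ℝ g} {z : g}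
    (h : ∀ i, ⁅b i, z⁆ ∈ M) (x : g) : ⁅x, z⁆ ∈ M := by
  obtain ⟨c, rfl⟩ : ∃ c : Fin n →₀ ℝ, x = ∑ i, c i • b i :=
    ⟨b.repr x, (b.sum_repr x).symm⟩
  rw [sum_lie']
  exact Submodule.sum_mem _ fun i _ => by rw [smul_lie]; exact M.smul_mem _ (h i)

lemma lie_mem_span {g : Type*} [LieRing g] [LieAlgebra ℝ g] {n : ℕ}
    (b : Module.Basis (Fin n) ℝ g) {M : Submodule ℝ g} {S : Set g}
    (h : ∀ i, ∀ z ∈ S, ⁅b i, z⁆ ∈ M) :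
    ∀ y ∈ Submodule.span ℝ S, ∀ x : g, ⁅x, y⁆ ∈ M := by
  intro y hy
  induction hy using Submodule.span_induction with
  | mem z hz => exact fun x => lie_mem_of_forall_basis b (fun i => h i z hz) x
  | zero => intro x; simp
  | add a b' _ _ ha hb => intro x; rw [lie_add]; exact M.add_mem (ha x) (hb x)
  | smul c a _ ha => intro x; rw [lie_smul]; exact M.smul_mem _ (ha x)

/-- The 6-dimensional nilpotent Lie algebra `N_{6,1,4}`, given by
`(0, 0, e¹², e¹³, 0, e¹⁴ + e²³ + e²⁵)`, does not admit a nice basis. -/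
theorem N614_admits_no_nice_basis
    (g : Type*) [LieRing g] [LieAlgebra ℝ g]
    (e : Module.Basis (Fin 6) ℝ g)
    (h12 : ⁅e 0, e 1⁆ = e 2) (h13 : ⁅e 0, e 2⁆ = e 3)
    (h14 : ⁅e 0, e 3⁆ = e 5) (h23 : ⁅e 1, e 2⁆ = e 5) (h25 : ⁅e 1, e 4⁆ = e 5)
    (h0 : ∀ i j : Fin 6, i < j →
      (i, j) ∉ ({(0, 1), (0, 2), (0, 3), (1, 2), (1, 4)} : Set (Fin 6 × Fin 6)) →
      ⁅e i, e j⁆ = 0) :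
    ¬ ∃ (n : ℕ) (b : Module.Basis (Fin n) ℝ g), IsNiceBasis b := by
  rintro ⟨n, b, hb1, hb2⟩
  -- n = 6
  have hn : n = 6 := by
    have h1 := Module.finrank_eq_card_basis e
    have h2 := Module.finrank_eq_card_basis b
    simp only [Fintype.card_fin] at h1 h2
    omega
  subst hn
  -- zero brackets
  have z04 : ⁅e 0, e 4⁆ = 0 := h0 0 4 (by decide) (by simp [Prod.ext_iff])
  have z05 : ⁅e 0, e 5⁆ = 0 := h0 0 5 (by decide) (by simp [Prod.ext_iff])
  have z13 : ⁅e 1, e 3⁆ = 0 := h0 1 3 (by decide) (by simp [Prod.ext_iff])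
  have z15 : ⁅e 1, e 5⁆ = 0 := h0 1 5 (by decide) (by simp [Prod.ext_iff])
  have z23 : ⁅e 2, e 3⁆ = 0 := h0 2 3 (by decide) (by simp [Prod.ext_iff])
  have z24 : ⁅e 2, e 4⁆ = 0 := h0 2 4 (by decide) (by simp [Prod.ext_iff])
  have z25 : ⁅e 2, e 5⁆ = 0 := h0 2 5 (by decide) (by simp [Prod.ext_iff])
  have z34 : ⁅e 3, e 4⁆ = 0 := h0 3 4 (by decide) (by simp [Prod.ext_iff])
  have z35 : ⁅e 3, e 5⁆ = 0 := h0 3 5 (by decide) (by simp [Prod.ext_iff])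
  have z45 : ⁅e 4, e 5⁆ = 0 := h0 4 5 (by decide) (by simp [Prod.ext_iff])
  have r32 : ⁅e 3, e 2⁆ = 0 := by rw [← lie_skew, z23, neg_zero]
  have r42 : ⁅e 4, e 2⁆ = 0 := by rw [← lie_skew, z24, neg_zero]
  have r52 : ⁅e 5, e 2⁆ = 0 := by rw [← lie_skew, z25, neg_zero]
  have r43 : ⁅e 4, e 3⁆ = 0 := by rw [← lie_skew, z34, neg_zero]
  have r53 : ⁅e 5, e 3⁆ = 0 := by rw [← lie_skew, z35, neg_zero]
  have r54 : ⁅e 5, e 4⁆ = 0 := by rw [← lie_skew, z45, neg_zero]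
  have r10 : ⁅e 1, e 0⁆ = -e 2 := by rw [← lie_skew, h12]
  have r20 : ⁅e 2, e 0⁆ = -e 3 := by rw [← lie_skew, h13]
  have r30 : ⁅e 3, e 0⁆ = -e 5 := by rw [← lie_skew, h14]
  have r40 : ⁅e 4, e 0⁆ = 0 := by rw [← lie_skew, z04, neg_zero]
  have r50 : ⁅e 5, e 0⁆ = 0 := by rw [← lie_skew, z05, neg_zero]
  have r21 : ⁅e 2, e 1⁆ = -e 5 := by rw [← lie_skew, h23]
  have r31 : ⁅e 3, e 1⁆ = 0 := by rw [← lie_skew, z13, neg_zero]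
  have r41 : ⁅e 4, e 1⁆ = -e 5 := by rw [← lie_skew, h25]
  have r51 : ⁅e 5, e 1⁆ = 0 := by rw [← lie_skew, z15, neg_zero]
  -- bracket against each basis vector
  have A0 : ∀ x : g, ⁅x, e 0⁆
      = -((e.repr x 1) • e 2) - (e.repr x 2) • e 3 - (e.repr x 3) • e 5 := by
    intro x
    nth_rewrite 1 [← e.sum_repr x]
    rw [Fin.sum_univ_six]
    simp only [add_lie, smul_lie, lie_self, r10, r20, r30, r40, r50, smul_zero, smul_neg]
    module
  have A1 : ∀ x : g, ⁅x, e 1⁆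
      = (e.repr x 0) • e 2 - (e.repr x 2) • e 5 - (e.repr x 4) • e 5 := by
    intro x
    nth_rewrite 1 [← e.sum_repr x]
    rw [Fin.sum_univ_six]
    simp only [add_lie, smul_lie, lie_self, h12, r21, r31, r41, r51, smul_zero, smul_neg]
    module
  have A2 : ∀ x : g, ⁅x, e 2⁆ = (e.repr x 0) • e 3 + (e.repr x 1) • e 5 := by
    intro x
    nth_rewrite 1 [← e.sum_repr x]
    rw [Fin.sum_univ_six]
    simp only [add_lie, smul_lie, lie_self, h13, h23, r32, r42, r52, smul_zero]
    module
  have A3 : ∀ x : g, ⁅x, e 3⁆ = (e.repr x 0) • e 5 := by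
    intro x
    nth_rewrite 1 [← e.sum_repr x]
    rw [Fin.sum_univ_six]
    simp only [add_lie, smul_lie, lie_self, h14, z13, z23, r43, r53, smul_zero]
    module
  have A4 : ∀ x : g, ⁅x, e 4⁆ = (e.repr x 1) • e 5 := by
    intro x
    nth_rewrite 1 [← e.sum_repr x]
    rw [Fin.sum_univ_six]
    simp only [add_lie, smul_lie, lie_self, z04, h25, z24, z34, r54, smul_zero]
    module
  have A5 : ∀ x : g, ⁅x, e 5⁆ = 0 := by
    intro x
    nth_rewrite 1 [← e.sum_repr x]
    rw [Fin.sum_univ_six]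
    simp [add_lie, smul_lie, z05, z15, z25, z35, z45]
  -- characteristic subspaces
  set D : Submodule ℝ g := Submodule.span ℝ ({e 2, e 3, e 5} : Set g) with hD_def
  set G3 : Submodule ℝ g := Submodule.span ℝ ({e 3, e 5} : Set g) with hG3_def
  set Z : Submodule ℝ g := Submodule.span ℝ ({e 5} : Set g) with hZ_def
  have he2D : e 2 ∈ D := Submodule.subset_span (by simp)
  have he3D : e 3 ∈ D := Submodule.subset_span (by simp)
  have he5D : e 5 ∈ D := Submodule.subset_span (by simp)
  have he3G : e 3 ∈ G3 := Submodule.subset_span (by simp)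
  have he5G : e 5 ∈ G3 := Submodule.subset_span (by simp)
  have he5Z : e 5 ∈ Z := Submodule.subset_span (by simp)
  -- brackets land in D; brackets with D land in G3; brackets with G3 land in Z
  have hD_br : ∀ x y : g, ⁅x, y⁆ ∈ D := by
    intro x y
    refine lie_mem_span e (fun i z hz => ?_) y (by rw [e.span_eq]; trivial) x
    obtain ⟨j, rfl⟩ := hz
    fin_cases j
    · show ⁅e i, e 0⁆ ∈ D
      rw [A0]
      exact D.sub_mem (D.sub_mem (D.neg_mem (D.smul_mem _ he2D)) (D.smul_mem _ he3D))
        (D.smul_mem _ he5D)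
    · show ⁅e i, e 1⁆ ∈ D
      rw [A1]
      exact D.sub_mem (D.sub_mem (D.smul_mem _ he2D) (D.smul_mem _ he5D)) (D.smul_mem _ he5D)
    · show ⁅e i, e 2⁆ ∈ D
      rw [A2]; exact D.add_mem (D.smul_mem _ he3D) (D.smul_mem _ he5D)
    · show ⁅e i, e 3⁆ ∈ D
      rw [A3]; exact D.smul_mem _ he5D
    · show ⁅e i, e 4⁆ ∈ D
      rw [A4]; exact D.smul_mem _ he5D
    · show ⁅e i, e 5⁆ ∈ D
      rw [A5]; exact D.zero_mem
  have hG3_br : ∀ y ∈ D, ∀ x : g, ⁅x, y⁆ ∈ G3 := by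
    refine lie_mem_span e (fun i z hz => ?_)
    rcases hz with h | h | h
    · subst h; rw [A2]; exact G3.add_mem (G3.smul_mem _ he3G) (G3.smul_mem _ he5G)
    · subst h; rw [A3]; exact G3.smul_mem _ he5G
    · rw [Set.mem_singleton_iff] at h; subst h; rw [A5]; exact G3.zero_mem
  have hZ_br : ∀ y ∈ G3, ∀ x : g, ⁅x, y⁆ ∈ Z := by
    refine lie_mem_span e (fun i z hz => ?_)
    rcases hz with h | h
    · subst h; rw [A3]; exact Z.smul_mem _ he5Z
    · rw [Set.mem_singleton_iff] at h; subst h; rw [A5]; exact Z.zero_mem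
  -- spans of nice basis vectors lying in the characteristic subspaces
  set MD : Submodule ℝ g := Submodule.span ℝ (Set.range b ∩ (D : Set g)) with hMD_def
  set MG : Submodule ℝ g := Submodule.span ℝ (Set.range b ∩ (G3 : Set g)) with hMG_def
  set MZ : Submodule ℝ g := Submodule.span ℝ (Set.range b ∩ (Z : Set g)) with hMZ_def
  have smul_cancel : ∀ (c : ℝ) (x : g) (M : Submodule ℝ g), c ≠ 0 → c • x ∈ M → x ∈ M := by
    intro c x M hc hcx
    exact (Submodule.smul_mem_iff M hc).mp hcx
  have hbr_MD : ∀ i, ∀ z ∈ Set.range b, ⁅b i, z⁆ ∈ MD := by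
    rintro i z ⟨j, rfl⟩
    obtain ⟨k, c, hk⟩ := hb1 i j
    rcases eq_or_ne c 0 with hc | hc
    · rw [hk, hc, zero_smul]; exact MD.zero_mem
    · rw [hk]
      refine MD.smul_mem _ (Submodule.subset_span ⟨⟨k, rfl⟩, ?_⟩)
      exact smul_cancel c _ D hc (hk ▸ hD_br (b i) (b j))
  have hMD : ∀ y ∈ D, y ∈ MD := by
    intro y hy
    rw [hD_def] at hy
    refine Submodule.span_le.mpr ?_ hy
    rintro z (h | h | h)
    · subst h; rw [← h12]
      exact lie_mem_span b hbr_MD (e 1) (by rw [b.span_eq]; trivial) (e 0)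
    · subst h; rw [← h13]
      exact lie_mem_span b hbr_MD (e 2) (by rw [b.span_eq]; trivial) (e 0)
    · rw [Set.mem_singleton_iff] at h; subst h; rw [← h14]
      exact lie_mem_span b hbr_MD (e 3) (by rw [b.span_eq]; trivial) (e 0)
  have hbr_MG : ∀ i, ∀ z ∈ Set.range b ∩ (D : Set g), ⁅b i, z⁆ ∈ MG := by
    rintro i z ⟨⟨j, rfl⟩, hzD⟩
    obtain ⟨k, c, hk⟩ := hb1 i j
    rcases eq_or_ne c 0 with hc | hc
    · rw [hk, hc, zero_smul]; exact MG.zero_mem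
    · rw [hk]
      refine MG.smul_mem _ (Submodule.subset_span ⟨⟨k, rfl⟩, ?_⟩)
      exact smul_cancel c _ G3 hc (hk ▸ hG3_br (b j) hzD (b i))
  have hMG : ∀ y ∈ G3, y ∈ MG := by
    intro y hy
    rw [hG3_def] at hy
    refine Submodule.span_le.mpr ?_ hy
    rintro z (h | h)
    · subst h; rw [← h13]
      exact lie_mem_span b hbr_MG (e 2) (hMD (e 2) he2D) (e 0)
    · rw [Set.mem_singleton_iff] at h; subst h; rw [← h14]
      exact lie_mem_span b hbr_MG (e 3) (hMD (e 3) he3D) (e 0)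
  have hbr_MZ : ∀ i, ∀ z ∈ Set.range b ∩ (G3 : Set g), ⁅b i, z⁆ ∈ MZ := by
    rintro i z ⟨⟨j, rfl⟩, hzG⟩
    obtain ⟨k, c, hk⟩ := hb1 i j
    rcases eq_or_ne c 0 with hc | hc
    · rw [hk, hc, zero_smul]; exact MZ.zero_mem
    · rw [hk]
      refine MZ.smul_mem _ (Submodule.subset_span ⟨⟨k, rfl⟩, ?_⟩)
      exact smul_cancel c _ Z hc (hk ▸ hZ_br (b j) hzG (b i))
  have hMZ : ∀ y ∈ Z, y ∈ MZ := by
    intro y hy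
    rw [hZ_def] at hy
    refine Submodule.span_le.mpr ?_ hy
    rintro z h
    rw [Set.mem_singleton_iff] at h; subst h; rw [← h14]
    exact lie_mem_span b hbr_MZ (e 3) (hMG (e 3) he3G) (e 0)
  -- existence of basis vectors with prescribed nonzero coordinate
  have exist_coord : ∀ (S : Set g) (i0 : Fin 6) (x0 : g), x0 ∈ Submodule.span ℝ S →
      e.repr x0 i0 ≠ 0 → ∃ z ∈ S, e.repr z i0 ≠ 0 := by
    intro S i0 x0 hx h
    by_contra hc
    push_neg at hc
    have hker : Submodule.span ℝ S ≤ LinearMap.ker (e.coord i0) :=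
      Submodule.span_le.mpr (fun z hz => LinearMap.mem_ker.mpr
        (by rw [Module.Basis.coord_apply]; exact hc z hz))
    exact h (by simpa [Module.Basis.coord_apply] using hker hx)
  obtain ⟨zu, ⟨⟨u, rfl⟩, huD⟩, hu2⟩ :
      ∃ z ∈ Set.range b ∩ (D : Set g), e.repr z 2 ≠ 0 := by
    refine exist_coord _ 2 (e 2) (hMD (e 2) he2D) (by simp)
  obtain ⟨zv, ⟨⟨v, rfl⟩, hvG⟩, hv3⟩ :
      ∃ z ∈ Set.range b ∩ (G3 : Set g), e.repr z 3 ≠ 0 := by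
    refine exist_coord _ 3 (e 3) (hMG (e 3) he3G) (by simp)
  obtain ⟨zw, ⟨⟨w, rfl⟩, hwZ⟩, hw5⟩ :
      ∃ z ∈ Set.range b ∩ (Z : Set g), e.repr z 5 ≠ 0 := by
    refine exist_coord _ 5 (e 5) (hMZ (e 5) he5Z) (by simp)
  obtain ⟨za, ⟨a, rfl⟩, ha0⟩ : ∃ z ∈ Set.range b, e.repr z 0 ≠ 0 := by
    refine exist_coord _ 0 (e 0) (by rw [b.span_eq]; trivial) (by simp)
  -- coefficient representations
  obtain ⟨s, hw⟩ : ∃ s : ℝ, s • e 5 = b w := Submodule.mem_span_singleton.mp hwZ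
  have hs0 : s ≠ 0 := by
    rw [← hw] at hw5
    simpa using hw5
  obtain ⟨p, q, hv⟩ : ∃ p q : ℝ, p • e 3 + q • e 5 = b v := Submodule.mem_span_pair.mp hvG
  have hp0 : p ≠ 0 := by
    rw [← hv] at hv3
    simpa [Finsupp.single_apply] using hv3
  obtain ⟨c2, z', hz'G, huz⟩ := Submodule.mem_span_insert.mp huD
  obtain ⟨c3, c5, hz'⟩ := Submodule.mem_span_pair.mp hz'G
  have hu' : b u = c2 • e 2 + (c3 • e 3 + c5 • e 5) := by rw [huz, ← hz']
  have hc20 : c2 ≠ 0 := by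
    rw [hu'] at hu2
    simpa [Finsupp.single_apply] using hu2
  -- basic distinctness
  have hw3 : e.repr (b w) 3 = 0 := by rw [← hw]; simp [Finsupp.single_apply]
  have hvw : v ≠ w := fun h => hv3 (by rw [h]; exact hw3)
  -- bracket formulas with the distinguished vectors
  have Bv : ∀ x : g, ⁅x, b v⁆ = (p * e.repr x 0) • e 5 := by
    intro x
    rw [← hv, lie_add, lie_smul, lie_smul, A3, A5, smul_zero, add_zero, smul_smul]
  have Bu : ∀ x : g, ⁅x, b u⁆
      = (c2 * e.repr x 0) • e 3 + (c2 * e.repr x 1 + c3 * e.repr x 0) • e 5 := by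
    intro x
    rw [hu', lie_add, lie_add, lie_smul, lie_smul, lie_smul, A2, A3, A5, smul_zero, add_zero]
    module
  -- b-coordinates of vectors in the span of e 3, e 5
  have key : ∀ α β : ℝ, α • e 3 + β • e 5
      = (α * p⁻¹) • b v + ((β - α * p⁻¹ * q) * s⁻¹) • b w := by
    intro α β
    have hcp : α * p⁻¹ * p = α := by field_simp
    have h1 : α • e 3 = (α * p⁻¹) • (p • e 3 + q • e 5) - (α * p⁻¹ * q) • e 5 := by
      rw [smul_add, smul_smul, smul_smul, hcp]; module
    have h2 : ∀ γ : ℝ, γ • e 5 = (γ * s⁻¹) • (s • e 5) := by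
      intro γ; rw [smul_smul, mul_assoc, inv_mul_cancel₀ hs0, mul_one]
    calc α • e 3 + β • e 5
        = ((α * p⁻¹) • (p • e 3 + q • e 5) - (α * p⁻¹ * q) • e 5) + β • e 5 := by rw [← h1]
      _ = (α * p⁻¹) • (p • e 3 + q • e 5) + (β - α * p⁻¹ * q) • e 5 := by module
      _ = (α * p⁻¹) • b v + ((β - α * p⁻¹ * q) * s⁻¹) • (s • e 5) := by rw [hv, ← h2]
      _ = _ := by rw [hw]
  have hreprv : ∀ α β : ℝ, b.repr (α • e 3 + β • e 5) v = α * p⁻¹ := by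
    intro α β
    rw [key]
    simp [Finsupp.single_apply, Ne.symm hvw]
  have hreprw5 : ∀ β : ℝ, b.repr (β • e 5) w = β * s⁻¹ := by
    intro β
    rw [show β • e 5 = (β * s⁻¹) • b w from by
      rw [← hw, smul_smul, mul_assoc, inv_mul_cancel₀ hs0, mul_one]]
    simp
  -- uniqueness of the index with nonzero 0-coordinate
  have hva : ∀ j j', e.repr (b j) 0 ≠ 0 → e.repr (b j') 0 ≠ 0 → j = j' := by
    have hstr : ∀ j, e.repr (b j) 0 ≠ 0 → structConst b v j w ≠ 0 := by
      intro j hj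
      show b.repr ⁅b v, b j⁆ w ≠ 0
      have hbr : ⁅b v, b j⁆ = (-(p * e.repr (b j) 0)) • e 5 := by
        rw [← lie_skew, Bv, neg_smul]
      rw [hbr, hreprw5]
      exact mul_ne_zero (neg_ne_zero.mpr (mul_ne_zero hp0 hj)) (inv_ne_zero hs0)
    exact fun j j' hj hj' => hb2 v w j j' (hstr j hj) (hstr j' hj')
  have ha_uniq : ∀ j, j ≠ a → e.repr (b j) 0 = 0 := by
    intro j hne
    by_contra h
    exact hne (hva j a h ha0)
  -- existence of a second index with nonzero 1-coordinate
  obtain ⟨m, hma, hm1⟩ : ∃ m, m ≠ a ∧ e.repr (b m) 1 ≠ 0 := by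
    by_contra hc
    push_neg at hc
    have h1 : e.coord 1 (e 1) = 1 := by simp
    have h0' : e.coord 0 (e 1) = 0 := by simp [Finsupp.single_apply]
    rw [← b.sum_repr (e 1), map_sum] at h1 h0'
    simp only [map_smul, smul_eq_mul] at h1 h0'
    have hsum1 : ∑ j, b.repr (e 1) j * e.coord 1 (b j)
        = b.repr (e 1) a * e.coord 1 (b a) :=
      Finset.sum_eq_single a
        (fun j _ hj => by rw [Module.Basis.coord_apply, hc j hj, mul_zero])
        (fun h => absurd (Finset.mem_univ a) h)
    have hsum0 : ∑ j, b.repr (e 1) j * e.coord 0 (b j)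
        = b.repr (e 1) a * e.coord 0 (b a) :=
      Finset.sum_eq_single a
        (fun j _ hj => by rw [Module.Basis.coord_apply, ha_uniq j hj, mul_zero])
        (fun h => absurd (Finset.mem_univ a) h)
    rw [hsum1] at h1
    rw [hsum0, Module.Basis.coord_apply] at h0'
    rcases mul_eq_zero.mp h0' with h | h
    · rw [h, zero_mul] at h1
      exact zero_ne_one h1
    · exact ha0 h
  have hm0 : e.repr (b m) 0 = 0 := ha_uniq m hma
  -- uniqueness of the second index
  have h1_uniq : ∀ j j', j ≠ a → j' ≠ a →
      e.repr (b j) 1 ≠ 0 → e.repr (b j') 1 ≠ 0 → j = j' := by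
    have hstr : ∀ j, j ≠ a → e.repr (b j) 1 ≠ 0 → structConst b u j w ≠ 0 := by
      intro j hja hj
      show b.repr ⁅b u, b j⁆ w ≠ 0
      have hbr : ⁅b u, b j⁆ = (-(c2 * e.repr (b j) 1)) • e 5 := by
        rw [← lie_skew, Bu, ha_uniq j hja]
        simp only [mul_zero, zero_smul, zero_add, add_zero, neg_smul]
      rw [hbr, hreprw5]
      exact mul_ne_zero (neg_ne_zero.mpr (mul_ne_zero hc20 hj)) (inv_ne_zero hs0)
    exact fun j j' hja hj'a hj hj' => hb2 u w j j' (hstr j hja hj) (hstr j' hj'a hj')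
  -- the sixth index
  obtain ⟨t, ht⟩ : ∃ t : Fin 6, t ∉ ({a, m, u, v, w} : Finset (Fin 6)) := by
    by_contra hc
    push_neg at hc
    have hsub : (Finset.univ : Finset (Fin 6)) ⊆ {a, m, u, v, w} := fun t _ => hc t
    have hle := Finset.card_le_card hsub
    have h5 : ({a, m, u, v, w} : Finset (Fin 6)).card ≤ 5 := by
      refine le_trans (Finset.card_insert_le _ _) (Nat.succ_le_succ ?_)
      refine le_trans (Finset.card_insert_le _ _) (Nat.succ_le_succ ?_)
      refine le_trans (Finset.card_insert_le _ _) (Nat.succ_le_succ ?_)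
      refine le_trans (Finset.card_insert_le _ _) (Nat.succ_le_succ ?_)
      simp
    rw [Finset.card_univ, Fintype.card_fin] at hle
    omega
  simp only [Finset.mem_insert, Finset.mem_singleton, not_or] at ht
  obtain ⟨hta, htm, htu, htv, htw⟩ := ht
  have ht0 : e.repr (b t) 0 = 0 := ha_uniq t hta
  have ht1 : e.repr (b t) 1 = 0 := by
    by_contra h
    exact htm (h1_uniq t m hta hma h hm1)
  -- expansion of b t
  have hbt : b t = e.repr (b t) 2 • e 2 + e.repr (b t) 3 • e 3
      + e.repr (b t) 4 • e 4 + e.repr (b t) 5 • e 5 := by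
    nth_rewrite 1 [← e.sum_repr (b t)]
    rw [Fin.sum_univ_six, ht0, ht1]
    simp only [zero_smul, zero_add]
  have Bt : ∀ x : g, ⁅x, b t⁆ = (e.repr (b t) 2 * e.repr x 0) • e 3
      + (e.repr x 1 * (e.repr (b t) 2 + e.repr (b t) 4)
        + e.repr (b t) 3 * e.repr x 0) • e 5 := by
    intro x
    nth_rewrite 1 [hbt]
    rw [lie_add, lie_add, lie_add, lie_smul, lie_smul, lie_smul, lie_smul,
      A2, A3, A4, A5, smul_zero, add_zero]
    module
  -- first constraint : coordinates 2 and 4 of b t sum to zero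
  have struct_mu_w : structConst b m u w ≠ 0 := by
    show b.repr ⁅b m, b u⁆ w ≠ 0
    have hbr : ⁅b m, b u⁆ = (c2 * e.repr (b m) 1) • e 5 := by
      rw [Bu (b m), hm0]
      simp only [mul_zero, zero_smul, zero_add, add_zero]
    rw [hbr, hreprw5]
    exact mul_ne_zero (mul_ne_zero hc20 hm1) (inv_ne_zero hs0)
  have hy24 : e.repr (b t) 2 + e.repr (b t) 4 = 0 := by
    by_contra hy
    have struct_mt_w : structConst b m t w ≠ 0 := by
      show b.repr ⁅b m, b t⁆ w ≠ 0
      have hbr : ⁅b m, b t⁆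
          = (e.repr (b m) 1 * (e.repr (b t) 2 + e.repr (b t) 4)) • e 5 := by
        rw [Bt (b m), hm0]
        simp only [mul_zero, zero_smul, zero_add, add_zero]
      rw [hbr, hreprw5]
      exact mul_ne_zero (mul_ne_zero hm1 hy) (inv_ne_zero hs0)
    exact htu (hb2 m w t u struct_mt_w struct_mu_w)
  -- second constraint : coordinate 2 of b t is zero
  have struct_au_v : structConst b a u v ≠ 0 := by
    show b.repr ⁅b a, b u⁆ v ≠ 0
    rw [Bu (b a), hreprv]
    exact mul_ne_zero (mul_ne_zero hc20 ha0) (inv_ne_zero hp0)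
  have hy2 : e.repr (b t) 2 = 0 := by
    by_contra hy
    have struct_at_v : structConst b a t v ≠ 0 := by
      show b.repr ⁅b a, b t⁆ v ≠ 0
      rw [Bt (b a), hreprv]
      exact mul_ne_zero (mul_ne_zero hy ha0) (inv_ne_zero hp0)
    exact htu (hb2 a v t u struct_at_v struct_au_v)
  have hy4 : e.repr (b t) 4 = 0 := by linarith
  -- final contradiction : b t lies in the span of b v and b w
  rw [hy2, hy4] at hbt
  simp only [zero_smul, zero_add, add_zero] at hbt
  have hone : b.repr (b t) t = (1 : ℝ) := by simp
  have hzero : b.repr (b t) t = (0 : ℝ) := by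
    nth_rewrite 1 [hbt]
    rw [key]
    simp [Finsupp.single_apply, Ne.symm htv, Ne.symm htw]
  rw [hone] at hzero
  exact one_ne_zero hzero
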